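/- For the single-qubit Z-rotation channel U(ρ) = e^{−iθZ/2} ρ e^{iθZ/2} with 0 ≤ θ ≤ π/4, the maximal Choi-state fidelity with completely stabilizer-preserving channels is at most (1+cosθ)/2: max over two-qubit stabilizer states σ of tr[Π_0 ρ_L(θ) Π_0 · Π_0 σ Π_0 / tr(Π_0σΠ_0)] ≤ max over single-qubit stabilizer states σ' of tr[ρ(θ) σ'] = (1+cosθ)/2, where ρ(θ) = (1/2)(I + cosθ X + sinθ Y). -/

import Mathlib

open Matrix BigOperators Kronecker

noncomputable section

def sigmaX : Matrix (Fin 2) (Fin 2) ℂ := !![0, 1; 1, 0]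
def sigmaY : Matrix (Fin 2) (Fin 2) ℂ := !![0, -Complex.I; Complex.I, 0]
def sigmaZ : Matrix (Fin 2) (Fin 2) ℂ := !![1, 0; 0, -1]

def IsStab1 (σ : Matrix (Fin 2) (Fin 2) ℂ) : Prop :=
  ∃ a b c : ℝ, |a| + |b| + |c| ≤ 1 ∧
    σ = (1/2 : ℂ) • (1 + (a : ℂ) • sigmaX + (b : ℂ) • sigmaY + (c : ℂ) • sigmaZ)

def pauliMat : Fin 4 → Matrix (Fin 2) (Fin 2) ℂ :=
  ![1, sigmaX, sigmaY, sigmaZ]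

def signedPauli2 (s : Bool) (a b : Fin 4) :
    Matrix (Fin 2 × Fin 2) (Fin 2 × Fin 2) ℂ :=
  (if s then (-1 : ℂ) else 1) • (pauliMat a ⊗ₖ pauliMat b)

def IsPureStab2 (σ : Matrix (Fin 2 × Fin 2) (Fin 2 × Fin 2) ℂ) : Prop :=
  ∃ (s₁ s₂ : Bool) (a₁ b₁ a₂ b₂ : Fin 4),
    signedPauli2 s₁ a₁ b₁ * signedPauli2 s₂ a₂ b₂
      = signedPauli2 s₂ a₂ b₂ * signedPauli2 s₁ a₁ b₁ ∧
    σ = (1/4 : ℂ) • ((1 + signedPauli2 s₁ a₁ b₁) * (1 + signedPauli2 s₂ a₂ b₂)) ∧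
    σ.trace = 1

def IsStab2 (σ : Matrix (Fin 2 × Fin 2) (Fin 2 × Fin 2) ℂ) : Prop :=
  σ ∈ convexHull ℝ {τ | IsPureStab2 τ}

def Pi0 : Matrix (Fin 2 × Fin 2) (Fin 2 × Fin 2) ℂ :=
  (1/2 : ℂ) • (1 + sigmaZ ⊗ₖ sigmaZ)

def rhoL (θ : ℝ) : Matrix (Fin 2 × Fin 2) (Fin 2 × Fin 2) ℂ :=
  (1/2 : ℂ) • (1 + ((Real.cos θ : ℝ) : ℂ) • (sigmaX ⊗ₖ sigmaX)
    + ((Real.sin θ : ℝ) : ℂ) • (sigmaY ⊗ₖ sigmaX))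

def rho1 (θ : ℝ) : Matrix (Fin 2) (Fin 2) ℂ :=
  (1/2 : ℂ) • (1 + ((Real.cos θ : ℝ) : ℂ) • sigmaX + ((Real.sin θ : ℝ) : ℂ) • sigmaY)



def pm : Fin 4 → Fin 4 → Fin 4 := ![![0,1,2,3],![1,0,3,2],![2,3,0,1],![3,2,1,0]]
def pw : Fin 4 → Fin 4 → ℂ := ![![1,1,1,1],![1,1,Complex.I,-Complex.I],![1,-Complex.I,1,Complex.I],![1,Complex.I,-Complex.I,1]]

lemma pauli_mul (i j : Fin 4) : pauliMat i * pauliMat j = pw i j • pauliMat (pm i j) := by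
  fin_cases i <;> fin_cases j <;>
    simp [pauliMat, pm, pw, sigmaX, sigmaY, sigmaZ, Matrix.one_fin_two, Matrix.mul_fin_two,
      Matrix.smul_of, Matrix.smul_cons, Matrix.vecHead, Matrix.vecTail, Complex.ext_iff]

lemma pauli_trace (i : Fin 4) : (pauliMat i).trace = if i = 0 then 2 else 0 := by
  fin_cases i <;> simp [pauliMat, sigmaX, sigmaY, sigmaZ, Matrix.trace_fin_two]

def KP (a b : Fin 4) : Matrix (Fin 2 × Fin 2) (Fin 2 × Fin 2) ℂ := pauliMat a ⊗ₖ pauliMat b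

lemma KP_mul (a b c d : Fin 4) : KP a b * KP c d = (pw a c * pw b d) • KP (pm a c) (pm b d) := by
  rw [KP, KP, ← Matrix.mul_kronecker_mul, pauli_mul, pauli_mul, smul_kronecker, kronecker_smul,
    smul_smul, KP]

lemma KP_trace (a b : Fin 4) : (KP a b).trace = if a = 0 ∧ b = 0 then 4 else 0 := by
  rw [KP, trace_kronecker, pauli_trace, pauli_trace]
  split_ifs with h h1 h2 <;> simp_all <;> norm_num

lemma KP00 : KP 0 0 = 1 := by
  rw [KP]; show (1 : Matrix (Fin 2) (Fin 2) ℂ) ⊗ₖ 1 = 1; exact Matrix.one_kronecker_one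

def Tv (a b : Fin 4) : ℂ := if a = 0 ∧ b = 0 then 4 else 0

lemma pm_comm : ∀ i j : Fin 4, pm i j = pm j i := by decide
lemma pm_diag : ∀ i : Fin 4, pm i i = 0 := by decide
lemma pw_diag (i : Fin 4) : pw i i = 1 := by
  fin_cases i <;> norm_num [pw, Matrix.vecHead, Matrix.vecTail]

lemma smul_KP_inj {x y : ℂ} {a b : Fin 4} (h : x • KP a b = y • KP a b) : x = y := by
  have h2 := congrArg (fun A => (A * KP a b).trace) h
  simp only [smul_mul_assoc, trace_smul, KP_mul, pm_diag, pw_diag, smul_eq_mul, one_mul,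
    KP_trace] at h2
  simpa using h2

lemma signed_eq (s : Bool) (a b : Fin 4) :
    signedPauli2 s a b = (if s then (-1:ℂ) else 1) • KP a b := rfl

def Pi0' : Matrix (Fin 2 × Fin 2) (Fin 2 × Fin 2) ℂ := Pi0

lemma Pi0_eq : Pi0 = (1/2 : ℂ) • (KP 0 0 + KP 3 3) := by
  rw [Pi0, KP00]; rfl

lemma rhoL_eq (θ : ℝ) : rhoL θ = (1/2 : ℂ) • (KP 0 0 + ((Real.cos θ : ℝ) : ℂ) • KP 1 1
    + ((Real.sin θ : ℝ) : ℂ) • KP 2 1) := by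
  rw [rhoL, KP00]; rfl

def Mmat (θ : ℝ) : Matrix (Fin 2 × Fin 2) (Fin 2 × Fin 2) ℂ :=
  (1/4 : ℂ) • (KP 0 0 + KP 3 3 + ((Real.cos θ : ℝ) : ℂ) • KP 1 1 - ((Real.cos θ : ℝ) : ℂ) • KP 2 2
    + ((Real.sin θ : ℝ) : ℂ) • KP 1 2 + ((Real.sin θ : ℝ) : ℂ) • KP 2 1)

lemma Pi0_idem : Pi0 * Pi0 = Pi0 := by
  simp only [Pi0_eq, smul_mul_assoc, mul_smul_comm, mul_add, add_mul, KP_mul]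
  norm_num [pm, pw, Matrix.vecHead, Matrix.vecTail, Matrix.cons_val_three, Matrix.cons_val_two, Matrix.cons_val_one, Matrix.cons_val_zero]
  module

lemma M_eq (θ : ℝ) : Pi0 * (Pi0 * (rhoL θ * (Pi0 * Pi0))) = Mmat θ := by
  simp only [Pi0_eq, rhoL_eq, Mmat, smul_mul_assoc, mul_smul_comm, mul_add, add_mul, KP_mul]
  norm_num [pm, pw, Matrix.vecHead, Matrix.vecTail, Matrix.cons_val_three, Matrix.cons_val_two, Matrix.cons_val_one, Matrix.cons_val_zero]
  module

lemma Ntrace (θ : ℝ) (σ : Matrix (Fin 2 × Fin 2) (Fin 2 × Fin 2) ℂ) :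
    (Pi0 * rhoL θ * Pi0 * (Pi0 * σ * Pi0)).trace = (Mmat θ * σ).trace := by
  have h1 : Pi0 * rhoL θ * Pi0 * (Pi0 * σ * Pi0)
      = (Pi0 * (rhoL θ * (Pi0 * (Pi0 * σ)))) * Pi0 := by
    simp only [mul_assoc]
  rw [h1, trace_mul_comm]
  congr 1
  have h2 : Pi0 * (Pi0 * (rhoL θ * (Pi0 * (Pi0 * σ)))) = (Pi0 * (Pi0 * (rhoL θ * (Pi0 * Pi0)))) * σ := by
    simp only [mul_assoc]
  rw [h2, M_eq]

lemma Dtrace (σ : Matrix (Fin 2 × Fin 2) (Fin 2 × Fin 2) ℂ) :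
    (Pi0 * σ * Pi0).trace = (Pi0 * σ).trace := by
  rw [trace_mul_comm, ← mul_assoc, Pi0_idem]

def Fv (θ : ℝ) : Fin 4 → Fin 4 → ℂ :=
  ![![1,0,0,0],
    ![0,((Real.cos θ : ℝ) : ℂ),((Real.sin θ : ℝ) : ℂ),0],
    ![0,((Real.sin θ : ℝ) : ℂ),-((Real.cos θ : ℝ) : ℂ),0],
    ![0,0,0,1]]

def Gv : Fin 4 → Fin 4 → ℂ := ![![2,0,0,0],![0,0,0,0],![0,0,0,0],![0,0,0,2]]

lemma trace_M_KP (θ : ℝ) (a b : Fin 4) : (Mmat θ * KP a b).trace = Fv θ a b := by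
  simp only [Mmat, smul_mul_assoc, add_mul, sub_mul, KP_mul, trace_smul, trace_add, trace_sub,
    smul_eq_mul, KP_trace]
  fin_cases a <;> fin_cases b <;>
    norm_num [pm, pw, Fv, Matrix.vecHead, Matrix.vecTail, Matrix.cons_val_three, Matrix.cons_val_two, Matrix.cons_val_one, Matrix.cons_val_zero] <;>
    norm_num [show ¬(3:Fin 4)=0 from by decide, show ¬(2:Fin 4)=0 from by decide,
      show ¬(1:Fin 4)=0 from by decide] <;> ring

lemma trace_Pi0_KP (a b : Fin 4) : (Pi0 * KP a b).trace = Gv a b := by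
  simp only [Pi0_eq, smul_mul_assoc, add_mul, KP_mul, trace_smul, trace_add, smul_eq_mul, KP_trace]
  fin_cases a <;> fin_cases b <;>
    norm_num [pm, pw, Gv, Matrix.vecHead, Matrix.vecTail, Matrix.cons_val_three, Matrix.cons_val_two, Matrix.cons_val_one, Matrix.cons_val_zero] <;>
    norm_num [show ¬(3:Fin 4)=0 from by decide, show ¬(2:Fin 4)=0 from by decide,
      show ¬(1:Fin 4)=0 from by decide]

lemma trace_KP (a b : Fin 4) : (KP a b).trace = Tv a b := KP_trace a b

lemma trace_one4 : (1 : Matrix (Fin 2 × Fin 2) (Fin 2 × Fin 2) ℂ).trace = 4 := by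
  rw [Matrix.trace_one]; norm_num

lemma trace_M_one (θ : ℝ) : (Mmat θ).trace = 1 := by
  have := trace_M_KP θ 0 0
  rw [KP00, mul_one] at this
  rw [this]; norm_num [Fv]

lemma trace_Pi0_one : (Pi0).trace = 2 := by
  have := trace_Pi0_KP 0 0
  rw [KP00, mul_one] at this
  rw [this]; norm_num [Gv]

lemma tau_expand (e₁ e₂ : ℂ) (a₁ b₁ a₂ b₂ : Fin 4) :
    (1 + e₁ • KP a₁ b₁) * (1 + e₂ • KP a₂ b₂)
      = 1 + e₁ • KP a₁ b₁ + e₂ • KP a₂ b₂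
        + (e₁ * e₂ * (pw a₁ a₂ * pw b₁ b₂)) • KP (pm a₁ a₂) (pm b₁ b₂) := by
  simp only [mul_add, add_mul, one_mul, mul_one, smul_mul_assoc, mul_smul_comm, KP_mul, smul_smul]
  module

lemma pure_data (θ : ℝ) (τ : Matrix (Fin 2 × Fin 2) (Fin 2 × Fin 2) ℂ) (h : IsPureStab2 τ) :
    ∃ (e₁ e₂ : ℂ) (a₁ b₁ a₂ b₂ : Fin 4),
      (e₁ = 1 ∨ e₁ = -1) ∧ (e₂ = 1 ∨ e₂ = -1) ∧
      pw a₁ a₂ * pw b₁ b₂ = pw a₂ a₁ * pw b₂ b₁ ∧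
      (1/4 : ℂ) * (4 + e₁ * Tv a₁ b₁ + e₂ * Tv a₂ b₂
        + e₁ * e₂ * (pw a₁ a₂ * pw b₁ b₂) * Tv (pm a₁ a₂) (pm b₁ b₂)) = 1 ∧
      (Mmat θ * τ).trace = (1/4 : ℂ) * (1 + e₁ * Fv θ a₁ b₁ + e₂ * Fv θ a₂ b₂
        + e₁ * e₂ * (pw a₁ a₂ * pw b₁ b₂) * Fv θ (pm a₁ a₂) (pm b₁ b₂)) ∧
      (Pi0 * τ).trace = (1/4 : ℂ) * (2 + e₁ * Gv a₁ b₁ + e₂ * Gv a₂ b₂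
        + e₁ * e₂ * (pw a₁ a₂ * pw b₁ b₂) * Gv (pm a₁ a₂) (pm b₁ b₂)) := by
  obtain ⟨s₁, s₂, a₁, b₁, a₂, b₂, hcomm, hτ, htr⟩ := h
  set e₁ : ℂ := if s₁ then (-1:ℂ) else 1 with he₁def
  set e₂ : ℂ := if s₂ then (-1:ℂ) else 1 with he₂def
  have he₁ : e₁ = 1 ∨ e₁ = -1 := by cases s₁ <;> simp [he₁def]
  have he₂ : e₂ = 1 ∨ e₂ = -1 := by cases s₂ <;> simp [he₂def]
  have he₁0 : e₁ ≠ 0 := by rcases he₁ with h|h <;> rw [h] <;> norm_num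
  have he₂0 : e₂ ≠ 0 := by rcases he₂ with h|h <;> rw [h] <;> norm_num
  -- commutation scalar
  have hcomm' : (e₁ * e₂ * (pw a₁ a₂ * pw b₁ b₂)) • KP (pm a₁ a₂) (pm b₁ b₂)
      = (e₂ * e₁ * (pw a₂ a₁ * pw b₂ b₁)) • KP (pm a₂ a₁) (pm b₂ b₁) := by
    have := hcomm
    rw [signed_eq, signed_eq, smul_mul_smul_comm, smul_mul_smul_comm, KP_mul, KP_mul,
      smul_smul, smul_smul] at this
    exact this
  rw [pm_comm a₂ a₁, pm_comm b₂ b₁] at hcomm'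
  have hω : pw a₁ a₂ * pw b₁ b₂ = pw a₂ a₁ * pw b₂ b₁ := by
    have hx := smul_KP_inj hcomm'
    have : e₁ * e₂ ≠ 0 := mul_ne_zero he₁0 he₂0
    field_simp at hx
    calc pw a₁ a₂ * pw b₁ b₂
        = (e₁ * e₂)⁻¹ * (e₁ * e₂ * (pw a₁ a₂ * pw b₁ b₂)) := by field_simp
      _ = (e₁ * e₂)⁻¹ * (e₂ * e₁ * (pw a₂ a₁ * pw b₂ b₁)) := by rw [hx]; ring
      _ = pw a₂ a₁ * pw b₂ b₁ := by field_simp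
  have hτ' : τ = (1/4 : ℂ) • (1 + e₁ • KP a₁ b₁ + e₂ • KP a₂ b₂
      + (e₁ * e₂ * (pw a₁ a₂ * pw b₁ b₂)) • KP (pm a₁ a₂) (pm b₁ b₂)) := by
    rw [hτ, signed_eq, signed_eq, ← he₁def, ← he₂def, tau_expand]
  -- trace condition
  have h0 : τ.trace = (1/4 : ℂ) * (4 + e₁ * Tv a₁ b₁ + e₂ * Tv a₂ b₂
      + e₁ * e₂ * (pw a₁ a₂ * pw b₁ b₂) * Tv (pm a₁ a₂) (pm b₁ b₂)) := by
    rw [hτ']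
    simp only [trace_smul, trace_add, trace_one4, trace_KP, smul_eq_mul]
    try ring
  rw [h0] at htr
  refine ⟨e₁, e₂, a₁, b₁, a₂, b₂, he₁, he₂, hω, htr, ?_, ?_⟩
  · rw [hτ']
    simp only [mul_smul_comm, mul_add, mul_one, trace_smul, trace_add, smul_eq_mul]
    try rw [trace_M_one]
    try simp only [trace_M_KP]
    try ring
  · rw [hτ']
    simp only [mul_smul_comm, mul_add, mul_one, trace_smul, trace_add, smul_eq_mul]
    try rw [trace_Pi0_one]
    try simp only [trace_Pi0_KP]
    try ring

set_option maxHeartbeats 8000000 in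
lemma scalar_core0 (θ : ℝ) (hs0 : 0 ≤ Real.sin θ) (hsc : Real.sin θ ≤ Real.cos θ)
    (e₁ e₂ : ℂ) (he₁ : e₁ = 1 ∨ e₁ = -1) (he₂ : e₂ = 1 ∨ e₂ = -1) (b₁ a₂ b₂ : Fin 4)
    (hω : pw 0 a₂ * pw b₁ b₂ = pw a₂ 0 * pw b₂ b₁)
    (htr : (1/4 : ℂ) * (4 + e₁ * Tv 0 b₁ + e₂ * Tv a₂ b₂
      + e₁*e₂*(pw 0 a₂ * pw b₁ b₂) * Tv (pm 0 a₂) (pm b₁ b₂)) = 1) :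
    (2 + e₁ * Gv 0 b₁ + e₂ * Gv a₂ b₂
      + e₁*e₂*(pw 0 a₂ * pw b₁ b₂) * Gv (pm 0 a₂) (pm b₁ b₂)).im = 0 ∧
    0 ≤ (2 + e₁ * Gv 0 b₁ + e₂ * Gv a₂ b₂
      + e₁*e₂*(pw 0 a₂ * pw b₁ b₂) * Gv (pm 0 a₂) (pm b₁ b₂)).re ∧
    (1 + e₁ * Fv θ 0 b₁ + e₂ * Fv θ a₂ b₂
      + e₁*e₂*(pw 0 a₂ * pw b₁ b₂) * Fv θ (pm 0 a₂) (pm b₁ b₂)).re ≤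
      (1 + Real.cos θ)/2 * (2 + e₁ * Gv 0 b₁ + e₂ * Gv a₂ b₂
      + e₁*e₂*(pw 0 a₂ * pw b₁ b₂) * Gv (pm 0 a₂) (pm b₁ b₂)).re := by
  have h4 : ∀ (x : Fin 4), x = 0 ∨ x = 1 ∨ x = 2 ∨ x = 3 := by decide
  rcases h4 b₁ with rfl|rfl|rfl|rfl <;> rcases h4 a₂ with rfl|rfl|rfl|rfl <;>
    rcases h4 b₂ with rfl|rfl|rfl|rfl <;>
    rcases he₁ with rfl|rfl <;> rcases he₂ with rfl|rfl <;>
    norm_num [pm, pw, Tv, Fv, Gv, Matrix.vecHead, Matrix.vecTail, Complex.cos_ofReal_re,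
        Matrix.cons_val_three, Matrix.cons_val_two, Matrix.cons_val_one, Matrix.cons_val_zero,
      Complex.sin_ofReal_re, Complex.ext_iff, show ¬(1:Fin 4)=0 from by decide,
      show ¬(2:Fin 4)=0 from by decide, show ¬(3:Fin 4)=0 from by decide] at * <;>
    linarith

set_option maxHeartbeats 8000000 in
lemma scalar_core1 (θ : ℝ) (hs0 : 0 ≤ Real.sin θ) (hsc : Real.sin θ ≤ Real.cos θ)
    (e₁ e₂ : ℂ) (he₁ : e₁ = 1 ∨ e₁ = -1) (he₂ : e₂ = 1 ∨ e₂ = -1) (b₁ a₂ b₂ : Fin 4)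
    (hω : pw 1 a₂ * pw b₁ b₂ = pw a₂ 1 * pw b₂ b₁)
    (htr : (1/4 : ℂ) * (4 + e₁ * Tv 1 b₁ + e₂ * Tv a₂ b₂
      + e₁*e₂*(pw 1 a₂ * pw b₁ b₂) * Tv (pm 1 a₂) (pm b₁ b₂)) = 1) :
    (2 + e₁ * Gv 1 b₁ + e₂ * Gv a₂ b₂
      + e₁*e₂*(pw 1 a₂ * pw b₁ b₂) * Gv (pm 1 a₂) (pm b₁ b₂)).im = 0 ∧
    0 ≤ (2 + e₁ * Gv 1 b₁ + e₂ * Gv a₂ b₂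
      + e₁*e₂*(pw 1 a₂ * pw b₁ b₂) * Gv (pm 1 a₂) (pm b₁ b₂)).re ∧
    (1 + e₁ * Fv θ 1 b₁ + e₂ * Fv θ a₂ b₂
      + e₁*e₂*(pw 1 a₂ * pw b₁ b₂) * Fv θ (pm 1 a₂) (pm b₁ b₂)).re ≤
      (1 + Real.cos θ)/2 * (2 + e₁ * Gv 1 b₁ + e₂ * Gv a₂ b₂
      + e₁*e₂*(pw 1 a₂ * pw b₁ b₂) * Gv (pm 1 a₂) (pm b₁ b₂)).re := by
  have h4 : ∀ (x : Fin 4), x = 0 ∨ x = 1 ∨ x = 2 ∨ x = 3 := by decide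
  rcases h4 b₁ with rfl|rfl|rfl|rfl <;> rcases h4 a₂ with rfl|rfl|rfl|rfl <;>
    rcases h4 b₂ with rfl|rfl|rfl|rfl <;>
    rcases he₁ with rfl|rfl <;> rcases he₂ with rfl|rfl <;>
    norm_num [pm, pw, Tv, Fv, Gv, Matrix.vecHead, Matrix.vecTail, Complex.cos_ofReal_re,
        Matrix.cons_val_three, Matrix.cons_val_two, Matrix.cons_val_one, Matrix.cons_val_zero,
      Complex.sin_ofReal_re, Complex.ext_iff, show ¬(1:Fin 4)=0 from by decide,
      show ¬(2:Fin 4)=0 from by decide, show ¬(3:Fin 4)=0 from by decide] at * <;>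
    linarith

set_option maxHeartbeats 8000000 in
lemma scalar_core2 (θ : ℝ) (hs0 : 0 ≤ Real.sin θ) (hsc : Real.sin θ ≤ Real.cos θ)
    (e₁ e₂ : ℂ) (he₁ : e₁ = 1 ∨ e₁ = -1) (he₂ : e₂ = 1 ∨ e₂ = -1) (b₁ a₂ b₂ : Fin 4)
    (hω : pw 2 a₂ * pw b₁ b₂ = pw a₂ 2 * pw b₂ b₁)
    (htr : (1/4 : ℂ) * (4 + e₁ * Tv 2 b₁ + e₂ * Tv a₂ b₂
      + e₁*e₂*(pw 2 a₂ * pw b₁ b₂) * Tv (pm 2 a₂) (pm b₁ b₂)) = 1) :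
    (2 + e₁ * Gv 2 b₁ + e₂ * Gv a₂ b₂
      + e₁*e₂*(pw 2 a₂ * pw b₁ b₂) * Gv (pm 2 a₂) (pm b₁ b₂)).im = 0 ∧
    0 ≤ (2 + e₁ * Gv 2 b₁ + e₂ * Gv a₂ b₂
      + e₁*e₂*(pw 2 a₂ * pw b₁ b₂) * Gv (pm 2 a₂) (pm b₁ b₂)).re ∧
    (1 + e₁ * Fv θ 2 b₁ + e₂ * Fv θ a₂ b₂
      + e₁*e₂*(pw 2 a₂ * pw b₁ b₂) * Fv θ (pm 2 a₂) (pm b₁ b₂)).re ≤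
      (1 + Real.cos θ)/2 * (2 + e₁ * Gv 2 b₁ + e₂ * Gv a₂ b₂
      + e₁*e₂*(pw 2 a₂ * pw b₁ b₂) * Gv (pm 2 a₂) (pm b₁ b₂)).re := by
  have h4 : ∀ (x : Fin 4), x = 0 ∨ x = 1 ∨ x = 2 ∨ x = 3 := by decide
  rcases h4 b₁ with rfl|rfl|rfl|rfl <;> rcases h4 a₂ with rfl|rfl|rfl|rfl <;>
    rcases h4 b₂ with rfl|rfl|rfl|rfl <;>
    rcases he₁ with rfl|rfl <;> rcases he₂ with rfl|rfl <;>
    norm_num [pm, pw, Tv, Fv, Gv, Matrix.vecHead, Matrix.vecTail, Complex.cos_ofReal_re,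
        Matrix.cons_val_three, Matrix.cons_val_two, Matrix.cons_val_one, Matrix.cons_val_zero,
      Complex.sin_ofReal_re, Complex.ext_iff, show ¬(1:Fin 4)=0 from by decide,
      show ¬(2:Fin 4)=0 from by decide, show ¬(3:Fin 4)=0 from by decide] at * <;>
    linarith

set_option maxHeartbeats 8000000 in
lemma scalar_core3 (θ : ℝ) (hs0 : 0 ≤ Real.sin θ) (hsc : Real.sin θ ≤ Real.cos θ)
    (e₁ e₂ : ℂ) (he₁ : e₁ = 1 ∨ e₁ = -1) (he₂ : e₂ = 1 ∨ e₂ = -1) (b₁ a₂ b₂ : Fin 4)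
    (hω : pw 3 a₂ * pw b₁ b₂ = pw a₂ 3 * pw b₂ b₁)
    (htr : (1/4 : ℂ) * (4 + e₁ * Tv 3 b₁ + e₂ * Tv a₂ b₂
      + e₁*e₂*(pw 3 a₂ * pw b₁ b₂) * Tv (pm 3 a₂) (pm b₁ b₂)) = 1) :
    (2 + e₁ * Gv 3 b₁ + e₂ * Gv a₂ b₂
      + e₁*e₂*(pw 3 a₂ * pw b₁ b₂) * Gv (pm 3 a₂) (pm b₁ b₂)).im = 0 ∧
    0 ≤ (2 + e₁ * Gv 3 b₁ + e₂ * Gv a₂ b₂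
      + e₁*e₂*(pw 3 a₂ * pw b₁ b₂) * Gv (pm 3 a₂) (pm b₁ b₂)).re ∧
    (1 + e₁ * Fv θ 3 b₁ + e₂ * Fv θ a₂ b₂
      + e₁*e₂*(pw 3 a₂ * pw b₁ b₂) * Fv θ (pm 3 a₂) (pm b₁ b₂)).re ≤
      (1 + Real.cos θ)/2 * (2 + e₁ * Gv 3 b₁ + e₂ * Gv a₂ b₂
      + e₁*e₂*(pw 3 a₂ * pw b₁ b₂) * Gv (pm 3 a₂) (pm b₁ b₂)).re := by
  have h4 : ∀ (x : Fin 4), x = 0 ∨ x = 1 ∨ x = 2 ∨ x = 3 := by decide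
  rcases h4 b₁ with rfl|rfl|rfl|rfl <;> rcases h4 a₂ with rfl|rfl|rfl|rfl <;>
    rcases h4 b₂ with rfl|rfl|rfl|rfl <;>
    rcases he₁ with rfl|rfl <;> rcases he₂ with rfl|rfl <;>
    norm_num [pm, pw, Tv, Fv, Gv, Matrix.vecHead, Matrix.vecTail, Complex.cos_ofReal_re,
        Matrix.cons_val_three, Matrix.cons_val_two, Matrix.cons_val_one, Matrix.cons_val_zero,
      Complex.sin_ofReal_re, Complex.ext_iff, show ¬(1:Fin 4)=0 from by decide,
      show ¬(2:Fin 4)=0 from by decide, show ¬(3:Fin 4)=0 from by decide] at * <;>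
    linarith

lemma quarter_re (z : ℂ) : ((1/4 : ℂ) * z).re = z.re / 4 := by
  simp [Complex.mul_re, Complex.div_re, Complex.normSq]; ring
lemma quarter_im (z : ℂ) : ((1/4 : ℂ) * z).im = z.im / 4 := by
  simp [Complex.mul_im, Complex.div_re, Complex.div_im, Complex.normSq]; ring

lemma scalar_bound (θ : ℝ) (hs0 : 0 ≤ Real.sin θ) (hsc : Real.sin θ ≤ Real.cos θ)
    (e₁ e₂ : ℂ) (he₁ : e₁ = 1 ∨ e₁ = -1) (he₂ : e₂ = 1 ∨ e₂ = -1) (a₁ b₁ a₂ b₂ : Fin 4)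
    (hω : pw a₁ a₂ * pw b₁ b₂ = pw a₂ a₁ * pw b₂ b₁)
    (htr : (1/4 : ℂ) * (4 + e₁ * Tv a₁ b₁ + e₂ * Tv a₂ b₂
      + e₁*e₂*(pw a₁ a₂ * pw b₁ b₂) * Tv (pm a₁ a₂) (pm b₁ b₂)) = 1) :
    ((1/4 : ℂ) * (2 + e₁ * Gv a₁ b₁ + e₂ * Gv a₂ b₂
      + e₁*e₂*(pw a₁ a₂ * pw b₁ b₂) * Gv (pm a₁ a₂) (pm b₁ b₂))).im = 0 ∧
    0 ≤ ((1/4 : ℂ) * (2 + e₁ * Gv a₁ b₁ + e₂ * Gv a₂ b₂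
      + e₁*e₂*(pw a₁ a₂ * pw b₁ b₂) * Gv (pm a₁ a₂) (pm b₁ b₂))).re ∧
    ((1/4 : ℂ) * (1 + e₁ * Fv θ a₁ b₁ + e₂ * Fv θ a₂ b₂
      + e₁*e₂*(pw a₁ a₂ * pw b₁ b₂) * Fv θ (pm a₁ a₂) (pm b₁ b₂))).re ≤
      (1 + Real.cos θ)/2 * ((1/4 : ℂ) * (2 + e₁ * Gv a₁ b₁ + e₂ * Gv a₂ b₂
      + e₁*e₂*(pw a₁ a₂ * pw b₁ b₂) * Gv (pm a₁ a₂) (pm b₁ b₂))).re := by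
  have h4 : ∀ (x : Fin 4), x = 0 ∨ x = 1 ∨ x = 2 ∨ x = 3 := by decide
  have core : (2 + e₁ * Gv a₁ b₁ + e₂ * Gv a₂ b₂
      + e₁*e₂*(pw a₁ a₂ * pw b₁ b₂) * Gv (pm a₁ a₂) (pm b₁ b₂)).im = 0 ∧
    0 ≤ (2 + e₁ * Gv a₁ b₁ + e₂ * Gv a₂ b₂
      + e₁*e₂*(pw a₁ a₂ * pw b₁ b₂) * Gv (pm a₁ a₂) (pm b₁ b₂)).re ∧
    (1 + e₁ * Fv θ a₁ b₁ + e₂ * Fv θ a₂ b₂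
      + e₁*e₂*(pw a₁ a₂ * pw b₁ b₂) * Fv θ (pm a₁ a₂) (pm b₁ b₂)).re ≤
      (1 + Real.cos θ)/2 * (2 + e₁ * Gv a₁ b₁ + e₂ * Gv a₂ b₂
      + e₁*e₂*(pw a₁ a₂ * pw b₁ b₂) * Gv (pm a₁ a₂) (pm b₁ b₂)).re := by
    rcases h4 a₁ with rfl|rfl|rfl|rfl
    · exact scalar_core0 θ hs0 hsc e₁ e₂ he₁ he₂ b₁ a₂ b₂ hω htr
    · exact scalar_core1 θ hs0 hsc e₁ e₂ he₁ he₂ b₁ a₂ b₂ hω htr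
    · exact scalar_core2 θ hs0 hsc e₁ e₂ he₁ he₂ b₁ a₂ b₂ hω htr
    · exact scalar_core3 θ hs0 hsc e₁ e₂ he₁ he₂ b₁ a₂ b₂ hω htr
  obtain ⟨h1, h2, h3⟩ := core
  refine ⟨?_, ?_, ?_⟩
  · rw [quarter_im, h1]; norm_num
  · rw [quarter_re]; linarith
  · rw [quarter_re, quarter_re]; linarith

lemma pure_bound (θ : ℝ) (hs0 : 0 ≤ Real.sin θ) (hsc : Real.sin θ ≤ Real.cos θ)
    (τ : Matrix (Fin 2 × Fin 2) (Fin 2 × Fin 2) ℂ) (h : IsPureStab2 τ) :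
    ((Pi0 * τ).trace).im = 0 ∧ 0 ≤ ((Pi0 * τ).trace).re ∧
      ((Mmat θ * τ).trace).re ≤ (1 + Real.cos θ)/2 * ((Pi0 * τ).trace).re := by
  obtain ⟨e₁, e₂, a₁, b₁, a₂, b₂, he₁, he₂, hω, htr, hN, hD⟩ := pure_data θ τ h
  rw [hN, hD]
  exact scalar_bound θ hs0 hsc e₁ e₂ he₁ he₂ a₁ b₁ a₂ b₂ hω htr

lemma stab2_bound (θ : ℝ) (hs0 : 0 ≤ Real.sin θ) (hsc : Real.sin θ ≤ Real.cos θ)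
    (σ : Matrix (Fin 2 × Fin 2) (Fin 2 × Fin 2) ℂ) (h : IsStab2 σ) :
    ((Pi0 * σ).trace).im = 0 ∧ 0 ≤ ((Pi0 * σ).trace).re ∧
      ((Mmat θ * σ).trace).re ≤ (1 + Real.cos θ)/2 * ((Pi0 * σ).trace).re := by
  set T : Set (Matrix (Fin 2 × Fin 2) (Fin 2 × Fin 2) ℂ) :=
    {σ | ((Pi0 * σ).trace).im = 0 ∧ 0 ≤ ((Pi0 * σ).trace).re ∧
      ((Mmat θ * σ).trace).re ≤ (1 + Real.cos θ)/2 * ((Pi0 * σ).trace).re} with hT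
  have key : ∀ (A x y : Matrix (Fin 2 × Fin 2) (Fin 2 × Fin 2) ℂ) (a b : ℝ),
      (A * (a • x + b • y)).trace = (a : ℂ) * (A * x).trace + (b : ℂ) * (A * y).trace := by
    intro A x y a b
    rw [mul_add, Matrix.mul_smul, Matrix.mul_smul, trace_add, trace_smul, trace_smul]
    simp [Complex.real_smul]
  have hconv : Convex ℝ T := by
    intro x hx y hy a b ha hb hab
    simp only [hT, Set.mem_setOf_eq] at hx hy ⊢
    constructor
    · rw [key]
      simp [Complex.add_im, Complex.mul_im, hx.1, hy.1]
    constructor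
    · rw [key]
      simp only [Complex.add_re, Complex.mul_re, Complex.ofReal_re, Complex.ofReal_im,
        hx.1, hy.1]
      nlinarith [hx.2.1, hy.2.1]
    · rw [key, key]
      simp only [Complex.add_re, Complex.mul_re, Complex.ofReal_re, Complex.ofReal_im,
        hx.1, hy.1]
      ring_nf
      nlinarith [mul_le_mul_of_nonneg_left hx.2.2 ha, mul_le_mul_of_nonneg_left hy.2.2 hb]
  have hsub : {τ | IsPureStab2 τ} ⊆ T := by
    intro τ hτ
    exact pure_bound θ hs0 hsc τ hτ
  exact convexHull_min hsub hconv h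

lemma trace_rho1_stab (θ : ℝ) (a b c : ℝ) :
    ((rho1 θ * ((1/2 : ℂ) • (1 + (a : ℂ) • sigmaX + (b : ℂ) • sigmaY + (c : ℂ) • sigmaZ))).trace).re
      = (1 + a * Real.cos θ + b * Real.sin θ) / 2 := by
  have h1 : (1 : Matrix (Fin 2) (Fin 2) ℂ) = pauliMat 0 := rfl
  have hX : sigmaX = pauliMat 1 := rfl
  have hY : sigmaY = pauliMat 2 := rfl
  have hZ : sigmaZ = pauliMat 3 := rfl
  rw [rho1, h1, hX, hY, hZ]
  simp only [mul_smul_comm, smul_mul_assoc, mul_add, add_mul, trace_smul, trace_add,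
    pauli_mul, smul_smul, smul_eq_mul, pauli_trace]
  norm_num [pm, pw, Matrix.vecHead, Matrix.vecTail, Matrix.cons_val_three, Matrix.cons_val_two, Matrix.cons_val_one, Matrix.cons_val_zero,
    show ¬(1:Fin 4)=0 from by decide, show ¬(2:Fin 4)=0 from by decide,
    show ¬(3:Fin 4)=0 from by decide]
  simp [Complex.div_re, Complex.add_re, Complex.mul_re, Complex.cos_ofReal_re,
    Complex.sin_ofReal_re, Complex.cos_ofReal_im, Complex.sin_ofReal_im]
  ring


/-- For the `Z`-rotation with `0 ≤ θ ≤ π/4`, the maximal normalized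
Choi-block overlap with two-qubit stabilizer states is at most `(1+cosθ)/2`, which
is exactly the maximal overlap of `ρ(θ) = (1/2)(I + cosθ X + sinθ Y)` with
single-qubit stabilizer states. -/
theorem stabilizer_fidelity_bound (θ : ℝ) (hθ0 : 0 ≤ θ) (hθ1 : θ ≤ Real.pi / 4) :
    (∀ σ : Matrix (Fin 2 × Fin 2) (Fin 2 × Fin 2) ℂ, IsStab2 σ →
      (Pi0 * σ * Pi0).trace ≠ 0 →
      ((Pi0 * rhoL θ * Pi0 * (Pi0 * σ * Pi0)).trace / (Pi0 * σ * Pi0).trace).re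
        ≤ (1 + Real.cos θ) / 2)
    ∧ (∃ σ' : Matrix (Fin 2) (Fin 2) ℂ, IsStab1 σ' ∧
        ((rho1 θ * σ').trace).re = (1 + Real.cos θ) / 2 ∧
        ∀ σ'' : Matrix (Fin 2) (Fin 2) ℂ, IsStab1 σ'' →
          ((rho1 θ * σ'').trace).re ≤ (1 + Real.cos θ) / 2) := by
  have hpi := Real.pi_pos
  have hs0 : 0 ≤ Real.sin θ := Real.sin_nonneg_of_nonneg_of_le_pi hθ0 (by linarith)
  have hc0 : 0 ≤ Real.cos θ := Real.cos_nonneg_of_mem_Icc ⟨by linarith, by linarith⟩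
  have hc1 : Real.cos θ ≤ 1 := Real.cos_le_one θ
  have hsc : Real.sin θ ≤ Real.cos θ := by
    have h1 : 0 ≤ Real.cos (θ + Real.pi / 4) :=
      Real.cos_nonneg_of_mem_Icc ⟨by linarith, by linarith⟩
    rw [Real.cos_add, Real.cos_pi_div_four, Real.sin_pi_div_four] at h1
    nlinarith [Real.sq_sqrt (by norm_num : (0:ℝ) ≤ 2), Real.sqrt_nonneg 2]
  constructor
  · intro σ hσ hne
    obtain ⟨him, hre, hN⟩ := stab2_bound θ hs0 hsc σ hσ
    rw [Ntrace θ σ, Dtrace σ]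
    rw [Dtrace σ] at hne
    have hDre : (Pi0 * σ).trace.re ≠ 0 := by
      intro h0
      apply hne
      rw [Complex.ext_iff]
      simp [h0, him]
    have hDpos : 0 < (Pi0 * σ).trace.re := lt_of_le_of_ne hre (Ne.symm hDre)
    have hDeq : (Pi0 * σ).trace = (((Pi0 * σ).trace.re : ℝ) : ℂ) := by
      rw [Complex.ext_iff]
      simp [him]
    rw [hDeq, Complex.div_ofReal_re]
    rw [div_le_iff₀ hDpos]
    linarith [hN]
  · refine ⟨(1/2 : ℂ) • (1 + ((1:ℝ) : ℂ) • sigmaX + ((0:ℝ) : ℂ) • sigmaY + ((0:ℝ) : ℂ) • sigmaZ),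
      ⟨1, 0, 0, by norm_num, rfl⟩, ?_, ?_⟩
    · rw [trace_rho1_stab θ 1 0 0]
      ring
    · rintro σ'' ⟨a, b, c, habc, rfl⟩
      rw [trace_rho1_stab θ a b c]
      have h1 : a * Real.cos θ ≤ |a| * Real.cos θ :=
        mul_le_mul_of_nonneg_right (le_abs_self a) hc0
      have h2 : b * Real.sin θ ≤ |b| * Real.sin θ :=
        mul_le_mul_of_nonneg_right (le_abs_self b) hs0
      have h3 : |b| * Real.sin θ ≤ |b| * Real.cos θ :=
        mul_le_mul_of_nonneg_left hsc (abs_nonneg b)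
      have h4 : (|a| + |b|) * Real.cos θ ≤ 1 * Real.cos θ := by
        apply mul_le_mul_of_nonneg_right _ hc0
        have := abs_nonneg c
        linarith
      nlinarith
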